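/- Picone's identity/inequality for the p-Laplacian: for u, v differentiable with v > 0 and u ≥ 0 on a domain, one has |∇u|^p − |∇v|^{p−2}∇v · ∇(u^p / v^{p−1}) ≥ 0 pointwise. -/

import Mathlib

private lemma young_form {p s a : ℝ} (hp : 1 < p) (hs : 0 ≤ s) (ha : 0 ≤ a) :
    p * s ^ (p - 1) * a ≤ a ^ p + (p - 1) * s ^ p := by
  have hpq : p.HolderConjugate (p / (p - 1)) := Real.HolderConjugate.conjExponent hp
  have h := Real.young_inequality_of_nonneg ha (Real.rpow_nonneg hs (p - 1)) hpq
  have hsp : (s ^ (p - 1)) ^ (p / (p - 1)) = s ^ p := by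
    rw [← Real.rpow_mul hs]
    have h1 : p - 1 ≠ 0 := by linarith
    field_simp
  rw [hsp] at h
  have hp0 : 0 < p := by linarith
  have hp1 : 0 < p - 1 := by linarith
  have : p * (a * s ^ (p - 1)) ≤ p * (a ^ p / p + s ^ p / (p / (p - 1))) := by
    exact mul_le_mul_of_nonneg_left h hp0.le
  calc p * s ^ (p - 1) * a = p * (a * s ^ (p - 1)) := by ring
    _ ≤ p * (a ^ p / p + s ^ p / (p / (p - 1))) := this
    _ = a ^ p + (p - 1) * s ^ p := by field_simp

private lemma key_ineq {p a b U V t : ℝ} (hp : 1 < p) (ha : 0 ≤ a) (hb : 0 < b)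
    (hU : 0 ≤ U) (hV : 0 < V) (ht : t ≤ b * a) :
    b ^ (p - 2) * (p * U ^ (p - 1) * V ^ (1 - p) * t
      + (1 - p) * U ^ p * V ^ (-p) * b ^ (2 : ℕ)) ≤ a ^ p := by
  set s : ℝ := U * b / V with hs_def
  have hs : 0 ≤ s := by positivity
  have e1 : s ^ (p - 1) = U ^ (p - 1) * b ^ (p - 1) / V ^ (p - 1) := by
    rw [hs_def, Real.div_rpow (by positivity) hV.le, Real.mul_rpow hU hb.le]
  have e2 : s ^ p = U ^ p * b ^ p / V ^ p := by
    rw [hs_def, Real.div_rpow (by positivity) hV.le, Real.mul_rpow hU hb.le]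
  have hb1 : b ^ (p - 2) * b = b ^ (p - 1) := by
    rw [← Real.rpow_add_one hb.ne' (p - 2)]; ring_nf
  have hb2 : b ^ (p - 2) * b ^ (2 : ℕ) = b ^ p := by
    rw [← Real.rpow_natCast b 2, ← Real.rpow_add hb]; norm_num
  have hV1 : V ^ (1 - p) = (V ^ (p - 1))⁻¹ := by
    rw [← Real.rpow_neg hV.le]; norm_num
  have hV2 : V ^ (-p) = (V ^ p)⁻¹ := Real.rpow_neg hV.le p
  have hcoef : 0 ≤ b ^ (p - 2) * (p * U ^ (p - 1) * V ^ (1 - p)) := by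
    have := Real.rpow_nonneg hU (p - 1)
    have := (Real.rpow_pos_of_pos hV (1 - p)).le
    have := (Real.rpow_pos_of_pos hb (p - 2)).le
    positivity
  have step1 : b ^ (p - 2) * (p * U ^ (p - 1) * V ^ (1 - p) * t
      + (1 - p) * U ^ p * V ^ (-p) * b ^ (2 : ℕ))
      ≤ p * s ^ (p - 1) * a + (1 - p) * s ^ p := by
    have h1 : b ^ (p - 2) * (p * U ^ (p - 1) * V ^ (1 - p) * t)
        ≤ b ^ (p - 2) * (p * U ^ (p - 1) * V ^ (1 - p)) * (b * a) := by
      calc b ^ (p - 2) * (p * U ^ (p - 1) * V ^ (1 - p) * t)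
          = b ^ (p - 2) * (p * U ^ (p - 1) * V ^ (1 - p)) * t := by ring
        _ ≤ b ^ (p - 2) * (p * U ^ (p - 1) * V ^ (1 - p)) * (b * a) :=
            mul_le_mul_of_nonneg_left ht hcoef
    have h2 : b ^ (p - 2) * (p * U ^ (p - 1) * V ^ (1 - p)) * (b * a)
        = p * s ^ (p - 1) * a := by
      rw [e1, hV1]
      have hVp : (V : ℝ) ^ (p - 1) ≠ 0 := (Real.rpow_pos_of_pos hV _).ne'
      field_simp
      rw [← hb1]; ring
    have h3 : b ^ (p - 2) * ((1 - p) * U ^ p * V ^ (-p) * b ^ (2 : ℕ))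
        = (1 - p) * s ^ p := by
      rw [e2, hV2]
      have hVp : (V : ℝ) ^ p ≠ 0 := (Real.rpow_pos_of_pos hV _).ne'
      field_simp
      rw [← hb2]; ring
    calc b ^ (p - 2) * (p * U ^ (p - 1) * V ^ (1 - p) * t
          + (1 - p) * U ^ p * V ^ (-p) * b ^ (2 : ℕ))
        = b ^ (p - 2) * (p * U ^ (p - 1) * V ^ (1 - p) * t)
          + b ^ (p - 2) * ((1 - p) * U ^ p * V ^ (-p) * b ^ (2 : ℕ)) := by ring
      _ ≤ b ^ (p - 2) * (p * U ^ (p - 1) * V ^ (1 - p)) * (b * a)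
          + (1 - p) * s ^ p := by rw [h3]; linarith
      _ = p * s ^ (p - 1) * a + (1 - p) * s ^ p := by rw [h2]
  have := young_form hp hs ha
  linarith

theorem picone_inequality
    (N : ℕ) (p : ℝ) (hp : 1 < p) (Ω : Set (EuclideanSpace ℝ (Fin N)))
    (u v : EuclideanSpace ℝ (Fin N) → ℝ)
    (hu : Differentiable ℝ u) (hv : Differentiable ℝ v)
    (hu0 : ∀ x ∈ Ω, 0 ≤ u x) (hv0 : ∀ x ∈ Ω, 0 < v x) :
    ∀ x ∈ Ω,
      ‖gradient v x‖ ^ (p - 2) *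
        (inner ℝ (gradient v x)
          ((p * u x ^ (p - 1) * v x ^ (1 - p)) • gradient u x +
            ((1 - p) * u x ^ p * v x ^ (-p)) • gradient v x) : ℝ)
        ≤ ‖gradient u x‖ ^ p := by
  intro x hx
  by_cases h : gradient v x = 0
  · simp only [h, inner_zero_left, mul_zero]
    exact Real.rpow_nonneg (norm_nonneg _) p
  · have hb : 0 < ‖gradient v x‖ := norm_pos_iff.mpr h
    rw [inner_add_right, real_inner_smul_right, real_inner_smul_right,
      real_inner_self_eq_norm_sq]
    exact key_ineq hp (norm_nonneg _) hb (hu0 x hx) (hv0 x hx)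
      (real_inner_le_norm _ _)
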